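/- For every cooperation strength λ ∈ [0,1) and every propagation matrix W (nonnegative with unit column sums), the basic cooperative optimization update T_λ has exactly one fixed point: there exists a unique state Ψ^{(∞)} = (Ψ^{(∞)}_1,…,Ψ^{(∞)}_n) such that T_λ(Ψ^{(∞)}) = Ψ^{(∞)}, i.e., the n difference equations Ψ^{(∞)}_i(a) = min_{x : x_i = a} ((1−λ) E_i(x) + λ ∑_{j=1}^n w_{ij} Ψ^{(∞)}_j(x_j)) have one and only one solution. -/

import Mathlib

set_option maxHeartbeats 1000000


open Finset Filter Topology

/-- A propagation matrix: nonnegative entries with unit column sums. -/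
def IsPropagationMatrix {n : ℕ} (W : Fin n → Fin n → ℝ) : Prop :=
  (∀ i j, 0 ≤ W i j) ∧ ∀ j, ∑ i, W i j = 1

/-- The basic cooperative optimization update `T_λ`:
`T_λ(Ψ)_i(a) = min_{x : x_i = a} ((1−λ) E_i(x) + λ ∑_j w_{ij} Ψ_j(x_j))`. -/
noncomputable def coopT {n : ℕ} {D : Fin n → Type} [∀ i, Fintype (D i)]
    [∀ i, Nonempty (D i)]
    (E : Fin n → ((i : Fin n) → D i) → ℝ) (W : Fin n → Fin n → ℝ) (lam : ℝ)
    (Ψ : (i : Fin n) → D i → ℝ) : (i : Fin n) → D i → ℝ :=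
  fun i a =>
    Finset.univ.inf' Finset.univ_nonempty
      (fun x : (j : Fin n) → D j =>
        (1 - lam) * E i (Function.update x i a) +
          lam * ∑ j, W i j * Ψ j (Function.update x i a j))

/-- The total objective `E(x) = ∑ i, E_i(x)`. -/
def objective {n : ℕ} {D : Fin n → Type}
    (E : Fin n → ((i : Fin n) → D i) → ℝ) (x : (i : Fin n) → D i) : ℝ :=
  ∑ i, E i x

/-- `x̃` is a consensus solution with respect to the state `Ψ` and cooperation strength
`lam`: for every `i`, `x̃` globally minimizes the modified sub-objective
`x ↦ (1−λ) E_i(x) + λ ∑_j w_{ij} Ψ_j(x_j)`. -/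
def IsConsensusState {n : ℕ} {D : Fin n → Type}
    (E : Fin n → ((i : Fin n) → D i) → ℝ) (W : Fin n → Fin n → ℝ) (lam : ℝ)
    (Ψ : (i : Fin n) → D i → ℝ) (xt : (i : Fin n) → D i) : Prop :=
  ∀ i, ∀ x : (j : Fin n) → D j,
    (1 - lam) * E i xt + lam * ∑ j, W i j * Ψ j (xt j)
      ≤ (1 - lam) * E i x + lam * ∑ j, W i j * Ψ j (x j)

/-- `inf'` is 1-Lipschitz in the function, w.r.t. the sup distance. -/
lemma abs_inf'_sub_inf'_le {ι : Type*} {s : Finset ι} (hs : s.Nonempty)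
    (F G : ι → ℝ) {c : ℝ} (h : ∀ x ∈ s, |F x - G x| ≤ c) :
    |s.inf' hs F - s.inf' hs G| ≤ c := by
  rw [abs_sub_le_iff]
  constructor
  · obtain ⟨y, hy, hGy⟩ := Finset.exists_mem_eq_inf' hs G
    have h1 : s.inf' hs F ≤ F y := Finset.inf'_le _ hy
    have h2 : F y - G y ≤ c := (le_abs_self _).trans (h y hy)
    rw [hGy]; linarith
  · obtain ⟨y, hy, hFy⟩ := Finset.exists_mem_eq_inf' hs F
    have h1 : s.inf' hs G ≤ G y := Finset.inf'_le _ hy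
    have h2 : G y - F y ≤ c := by
      calc G y - F y = -(F y - G y) := by ring
        _ ≤ |F y - G y| := neg_le_abs _
        _ ≤ c := h y hy
    rw [hFy]; linarith

/-- For every cooperation strength `λ ∈ [0,1)` and every propagation
matrix `W`, the basic cooperative optimization update `T_λ` has exactly one fixed point. -/
theorem unique_equilibrium (n : ℕ) (hn : 1 ≤ n) (D : Fin n → Type)
    [∀ i, Fintype (D i)] [∀ i, Nonempty (D i)]
    (E : Fin n → ((i : Fin n) → D i) → ℝ) (W : Fin n → Fin n → ℝ)
    (hW : IsPropagationMatrix W) (lam : ℝ) (hlam0 : 0 ≤ lam) (hlam1 : lam < 1) :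
    ∃! Ψ : (i : Fin n) → D i → ℝ, coopT E W lam Ψ = Ψ := by
  obtain ⟨hWnn, hWcol⟩ := hW
  set X := PiLp 1 (fun i : Fin n => D i → ℝ) with hX
  haveI : Nonempty X := ⟨WithLp.toLp 1 (fun _ _ => 0)⟩
  set f : X → X := fun Ψ => WithLp.toLp 1 (coopT E W lam Ψ) with hf
  set K : NNReal := lam.toNNReal with hK
  have hKlam : (K : ℝ) = lam := Real.coe_toNNReal _ hlam0
  -- distance of each coordinate of the image
  have hterm : ∀ (Ψ Φ : X) (i : Fin n),
      dist (f Ψ i) (f Φ i) ≤ lam * ∑ j, W i j * dist (Ψ j) (Φ j) := by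
    intro Ψ Φ i
    have hbnd : 0 ≤ lam * ∑ j, W i j * dist (Ψ j) (Φ j) := by
      apply mul_nonneg hlam0
      exact Finset.sum_nonneg fun j _ => mul_nonneg (hWnn i j) dist_nonneg
    rw [dist_pi_le_iff hbnd]
    intro a
    rw [Real.dist_eq]
    show |coopT E W lam Ψ i a - coopT E W lam Φ i a| ≤ _
    apply abs_inf'_sub_inf'_le
    intro x _
    have heq : ((1 - lam) * E i (Function.update x i a) +
          lam * ∑ j, W i j * Ψ j (Function.update x i a j)) -
        ((1 - lam) * E i (Function.update x i a) +
          lam * ∑ j, W i j * Φ j (Function.update x i a j))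
        = lam * ∑ j, W i j *
            (Ψ j (Function.update x i a j) - Φ j (Function.update x i a j)) := by
      simp only [Finset.mul_sum, mul_sub]
      rw [Finset.sum_sub_distrib]
      ring
    rw [heq, abs_mul, abs_of_nonneg hlam0]
    apply mul_le_mul_of_nonneg_left _ hlam0
    calc |∑ j, W i j * (Ψ j (Function.update x i a j) - Φ j (Function.update x i a j))|
        ≤ ∑ j, |W i j * (Ψ j (Function.update x i a j) - Φ j (Function.update x i a j))| :=
          Finset.abs_sum_le_sum_abs _ _
      _ ≤ ∑ j, W i j * dist (Ψ j) (Φ j) := by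
          apply Finset.sum_le_sum
          intro j _
          rw [abs_mul, abs_of_nonneg (hWnn i j)]
          apply mul_le_mul_of_nonneg_left _ (hWnn i j)
          rw [← Real.dist_eq]
          exact dist_le_pi_dist (Ψ j) (Φ j) _
  have hlip : ∀ Ψ Φ : X, dist (f Ψ) (f Φ) ≤ lam * dist Ψ Φ := by
    intro Ψ Φ
    have hd : ∀ Ψ' Φ' : X, dist Ψ' Φ' = ∑ i, dist (Ψ' i) (Φ' i) := by
      intro Ψ' Φ'
      rw [PiLp.dist_eq_sum (p := 1) (by norm_num) Ψ' Φ']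
      simp [Real.rpow_one]
    rw [hd, hd]
    calc ∑ i, dist (f Ψ i) (f Φ i)
        ≤ ∑ i, lam * ∑ j, W i j * dist (Ψ j) (Φ j) :=
          Finset.sum_le_sum fun i _ => hterm Ψ Φ i
      _ = lam * ∑ j, (∑ i, W i j) * dist (Ψ j) (Φ j) := by
          rw [← Finset.mul_sum, Finset.sum_comm]
          congr 1
          exact Finset.sum_congr rfl fun j _ => by rw [Finset.sum_mul]
      _ = lam * ∑ j, dist (Ψ j) (Φ j) := by
          congr 1
          exact Finset.sum_congr rfl fun j _ => by rw [hWcol j, one_mul]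
  have hcon : ContractingWith K f := by
    constructor
    · rw [← NNReal.coe_lt_one, hKlam]; exact hlam1
    · apply LipschitzWith.of_dist_le_mul
      intro Ψ Φ
      rw [hKlam]
      exact hlip Ψ Φ
  obtain ⟨Ψinf, hfix⟩ : ∃ Ψ : X, f Ψ = Ψ := ⟨hcon.fixedPoint f, hcon.fixedPoint_isFixedPt⟩
  refine ⟨Ψinf.ofLp, congrArg WithLp.ofLp hfix, ?_⟩
  intro Ψ hΨ
  exact congrArg WithLp.ofLp (hcon.fixedPoint_unique' (show f (WithLp.toLp 1 Ψ) = WithLp.toLp 1 Ψ from congrArg (WithLp.toLp 1) hΨ) hfix)
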